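/- Tree factorial leaf identity: for every rooted forest f, |f|/f! = Σ_{v ∈ leaves(f)} 1/(f∖{v})!, where the sum runs over the leaves of f and f∖{v} is the forest obtained by deleting leaf v. -/

import Mathlib

/-- Planar rooted trees. -/
inductive RTree : Type where
  | node : List RTree → RTree

mutual
/-- Number of nodes of a tree. -/
def tsize : RTree → ℕ
  | .node l => 1 + fsize l
/-- Number of nodes of a forest. -/
def fsize : List RTree → ℕ
  | [] => 0
  | t :: ts => tsize t + fsize ts
end

mutual
/-- The tree factorial `t! = Π_{v ∈ V(t)} |t_v|`. -/
def tfact : RTree → ℕ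
  | .node l => (1 + fsize l) * ffact l
/-- The tree factorial of a forest (product over its trees). -/
def ffact : List RTree → ℕ
  | [] => 1
  | t :: ts => tfact t * ffact ts
end

mutual
/-- All forests obtained from a tree by deleting one of its leaves
(one entry of the list for each leaf of the tree). -/
def delT : RTree → List (List RTree)
  | .node [] => [[]]
  | .node (t :: ts) => (delF (t :: ts)).map (fun g => [RTree.node g])
/-- All forests obtained from a forest by deleting one of its leaves
(one entry of the list for each leaf of the forest). -/
def delF : List RTree → List (List RTree)
  | [] => []
  | t :: ts => (delT t).map (· ++ ts) ++ (delF ts).map (t :: ·)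
end

mutual
theorem tfact_pos (t : RTree) : 0 < tfact t := by
  cases t with
  | node l => simpa [tfact] using ffact_pos l
theorem ffact_pos (f : List RTree) : 0 < ffact f := by
  cases f with
  | nil => simp [ffact]
  | cons t ts => exact Nat.mul_pos (tfact_pos t) (ffact_pos ts)
end

theorem fsize_append (a b : List RTree) : fsize (a ++ b) = fsize a + fsize b := by
  induction a with
  | nil => simp [fsize]
  | cons t ts ih => simp [fsize, ih]; ring

theorem ffact_append (a b : List RTree) : ffact (a ++ b) = ffact a * ffact b := by
  induction a with
  | nil => simp [ffact]
  | cons t ts ih => simp [ffact, ih]; ring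

mutual
theorem fsize_delT (t : RTree) (g : List RTree) (hg : g ∈ delT t) :
    fsize g + 1 = tsize t := by
  cases t with
  | node l =>
    cases l with
    | nil =>
      simp [delT] at hg
      subst hg
      simp [fsize, tsize]
    | cons a ts =>
      simp only [delT, List.mem_map] at hg
      obtain ⟨h, hh, rfl⟩ := hg
      have := fsize_delF (a :: ts) h hh
      simp [fsize, tsize] at *
      omega
theorem fsize_delF (f : List RTree) (g : List RTree) (hg : g ∈ delF f) :
    fsize g + 1 = fsize f := by
  cases f with
  | nil => simp [delF] at hg
  | cons t ts =>
    simp only [delF, List.mem_append, List.mem_map] at hg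
    rcases hg with ⟨h, hh, rfl⟩ | ⟨h, hh, rfl⟩
    · have := fsize_delT t h hh
      rw [fsize_append]
      simp [fsize] at *
      omega
    · have := fsize_delF ts h hh
      simp [fsize] at *
      omega
end

mutual
theorem treeId (t : RTree) :
    (tsize t : ℚ) / (tfact t : ℚ) =
      ((delT t).map (fun g => (1 : ℚ) / (ffact g : ℚ))).sum := by
  cases t with
  | node l =>
    cases l with
    | nil => simp [delT, tsize, tfact, fsize, ffact]
    | cons a ts =>
      have hsz : (0 : ℚ) < fsize (a :: ts) := by
        have : 0 < fsize (a :: ts) := by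
          cases a with
          | node m => simp [fsize, tsize]; try omega
        exact_mod_cast this
      have hff : (0 : ℚ) < ffact (a :: ts) := by exact_mod_cast ffact_pos (a :: ts)
      have key : ((delT (RTree.node (a :: ts))).map (fun g => (1 : ℚ) / (ffact g : ℚ))).sum
          = ((delF (a :: ts)).map
              (fun h => ((fsize (a :: ts) : ℚ))⁻¹ * ((1 : ℚ) / (ffact h : ℚ)))).sum := by
        rw [delT, List.map_map]
        congr 1
        refine List.map_congr_left ?_
        intro h hh
        have h1 : fsize h + 1 = fsize (a :: ts) := fsize_delF _ h hh
        simp only [Function.comp, ffact, tfact, ffact]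
        have : ((1 + fsize h : ℕ) : ℚ) = (fsize (a :: ts) : ℚ) := by
          exact_mod_cast congrArg (Nat.cast (R := ℚ)) (by omega : 1 + fsize h = fsize (a :: ts))
        push_cast
        rw [show ((1 : ℚ) + (fsize h : ℚ)) = (fsize (a :: ts) : ℚ) by exact_mod_cast this]
        try field_simp
      rw [key, List.sum_map_mul_left, ← forestId (a :: ts)]
      simp only [tsize, tfact]
      push_cast
      field_simp
      try ring
theorem forestId (f : List RTree) :
    (fsize f : ℚ) / (ffact f : ℚ) =
      ((delF f).map (fun g => (1 : ℚ) / (ffact g : ℚ))).sum := by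
  cases f with
  | nil => simp [delF, fsize, ffact]
  | cons t ts =>
    have htf : (0 : ℚ) < tfact t := by exact_mod_cast tfact_pos t
    have hff : (0 : ℚ) < ffact ts := by exact_mod_cast ffact_pos ts
    rw [delF, List.map_append, List.sum_append, List.map_map, List.map_map]
    have e1 : ((delT t).map ((fun g => (1 : ℚ) / (ffact g : ℚ)) ∘ (· ++ ts))).sum
        = ((ffact ts : ℚ))⁻¹ * ((delT t).map (fun g => (1 : ℚ) / (ffact g : ℚ))).sum := by
      rw [← List.sum_map_mul_left]
      congr 1
      refine List.map_congr_left ?_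
      intro g _
      simp only [Function.comp, ffact_append]
      push_cast
      try field_simp
      try ring
    have e2 : ((delF ts).map ((fun g => (1 : ℚ) / (ffact g : ℚ)) ∘ (t :: ·))).sum
        = ((tfact t : ℚ))⁻¹ * ((delF ts).map (fun g => (1 : ℚ) / (ffact g : ℚ))).sum := by
      rw [← List.sum_map_mul_left]
      congr 1
      refine List.map_congr_left ?_
      intro g _
      simp only [Function.comp, ffact]
      push_cast
      try field_simp
      try ring
    rw [e1, e2, ← treeId t, ← forestId ts]
    simp only [fsize, ffact]
    push_cast
    field_simp
end

/-- tree factorial leaf identity: for every rooted forest `f`,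
`|f| / f! = Σ_{v ∈ leaves(f)} 1 / (f∖{v})!`, the sum running over the leaves
of `f`, where `f∖{v}` is the forest obtained by deleting the leaf `v`. -/
theorem tree_factorial_leaf_identity (f : List RTree) :
    (fsize f : ℚ) / (ffact f : ℚ) =
      ((delF f).map (fun g => (1 : ℚ) / (ffact g : ℚ))).sum :=
  forestId f
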